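/- Let k be an algebraically closed field and A a finite-dimensional k-algebra, and let t and t̃ be two Calabi–Yau families of traces on the finitely generated projective right A-modules, with associated operations τ and τ̃ (where τ_R(y)_P := Σ_i g^i ∘ y ∘ g_i for dual bases with respect to t, and τ̃ is defined analogously using t̃). Then the two resulting Higman ideals coincide: for every finitely generated projective R and y ∈ End_A(R) there exist a finitely generated projective R' and y' ∈ End_A(R') such that τ_R(y)_P = τ̃_{R'}(y')_P for all finitely generated projective P, and conversely. -/

import Mathlib

universe u

/-- A bundled finitely generated projective right `A`-module (with compatible `k`-action). -/
structure FGProj (k A : Type u) [Field k] [Ring A] [Algebra k A] : Type (u + 1) where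
  carrier : Type u
  [isAddCommGroup : AddCommGroup carrier]
  [isModuleK : Module k carrier]
  [isModuleA : Module Aᵐᵒᵖ carrier]
  [isTower : IsScalarTower k Aᵐᵒᵖ carrier]
  [isFinite : Module.Finite Aᵐᵒᵖ carrier]
  [isProjective : Module.Projective Aᵐᵒᵖ carrier]

attribute [instance] FGProj.isAddCommGroup FGProj.isModuleK FGProj.isModuleA
  FGProj.isTower FGProj.isFinite FGProj.isProjective

instance (k A : Type u) [Field k] [Ring A] [Algebra k A] : CoeSort (FGProj k A) (Type u) :=
  ⟨FGProj.carrier⟩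

/-- A Calabi–Yau family of traces on the finitely generated projective right `A`-modules. -/
structure CYTraces (k A : Type u) [Field k] [Ring A] [Algebra k A] : Type (u + 1) where
  t : ∀ P : FGProj k A, ((P : Type u) →ₗ[Aᵐᵒᵖ] P) →ₗ[k] k
  cyclic : ∀ (P Q : FGProj k A) (f : (P : Type u) →ₗ[Aᵐᵒᵖ] Q) (g : (Q : Type u) →ₗ[Aᵐᵒᵖ] P),
    t P (g ∘ₗ f) = t Q (f ∘ₗ g)
  nondeg_left : ∀ (P Q : FGProj k A) (f : (P : Type u) →ₗ[Aᵐᵒᵖ] Q), f ≠ 0 →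
    ∃ g : (Q : Type u) →ₗ[Aᵐᵒᵖ] P, t Q (f ∘ₗ g) ≠ 0
  nondeg_right : ∀ (P Q : FGProj k A) (g : (Q : Type u) →ₗ[Aᵐᵒᵖ] P), g ≠ 0 →
    ∃ f : (P : Type u) →ₗ[Aᵐᵒᵖ] Q, t Q (f ∘ₗ g) ≠ 0

open scoped Classical

open scoped Classical

section Aux

variable {k A : Type u} [Field k] [Ring A] [Algebra k A]

theorem FGProj.fd [FiniteDimensional k A] (P : FGProj k A) :
    FiniteDimensional k P.carrier := by
  have h1 : Module.Finite k Aᵐᵒᵖ := Module.Finite.equiv (MulOpposite.opLinearEquiv k)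
  exact Module.Finite.trans Aᵐᵒᵖ P.carrier

theorem FGProj.fdHom [FiniteDimensional k A] (P Q : FGProj k A) :
    FiniteDimensional k (P.carrier →ₗ[Aᵐᵒᵖ] Q.carrier) := by
  have := P.fd (A := A); have := Q.fd (A := A)
  exact FiniteDimensional.of_injective
    (LinearMap.restrictScalarsₗ k Aᵐᵒᵖ P.carrier Q.carrier k)
    (LinearMap.restrictScalars_injective k)

/-- Existence of the "shift" element comparing two traces at a fixed module. -/
theorem sumComp (P R Q : FGProj k A) {ι : Type u} [Fintype ι]
    (f : ι → (P.carrier →ₗ[Aᵐᵒᵖ] R.carrier)) (g : Q.carrier →ₗ[Aᵐᵒᵖ] P.carrier) :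
    (∑ i, f i) ∘ₗ g = ∑ i, f i ∘ₗ g := by
  ext x; simp

/-- Existence of the "shift" element comparing two traces at a fixed module. -/
theorem exists_shift [FiniteDimensional k A] (t t' : CYTraces k A) (R : FGProj k A) :
    ∃ u : R.carrier →ₗ[Aᵐᵒᵖ] R.carrier, ∀ x : R.carrier →ₗ[Aᵐᵒᵖ] R.carrier,
      t'.t R x = t.t R (x ∘ₗ u) := by
  haveI := R.fdHom (k := k) (A := A) R
  let Θ : (R.carrier →ₗ[Aᵐᵒᵖ] R.carrier) →ₗ[k]
      Module.Dual k (R.carrier →ₗ[Aᵐᵒᵖ] R.carrier) :=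
    { toFun := fun u =>
        { toFun := fun x => t.t R (x ∘ₗ u)
          map_add' := fun a b => by
            show t.t R ((a + b) ∘ₗ u) = t.t R (a ∘ₗ u) + t.t R (b ∘ₗ u)
            rw [LinearMap.add_comp, map_add]
          map_smul' := fun c a => by
            show t.t R ((c • a) ∘ₗ u) = c • t.t R (a ∘ₗ u)
            rw [LinearMap.smul_comp, map_smul] }
      map_add' := fun u v => by
        ext x; simp only [LinearMap.coe_mk, AddHom.coe_mk, LinearMap.add_apply]
        rw [LinearMap.comp_add, map_add]
      map_smul' := fun c u => by
        ext x
        simp only [LinearMap.coe_mk, AddHom.coe_mk, RingHom.id_apply, LinearMap.smul_apply,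
          smul_eq_mul]
        have : x ∘ₗ (c • u) = c • (x ∘ₗ u) := by
          ext v; exact x.map_smul_of_tower c (u v)
        rw [this, map_smul, smul_eq_mul] }
  have hinj : Function.Injective Θ := by
    rw [← LinearMap.ker_eq_bot, LinearMap.ker_eq_bot']
    intro u hu
    by_contra hne
    obtain ⟨f, hf⟩ := t.nondeg_right R R u hne
    exact hf (LinearMap.congr_fun hu f)
  have hsurj : Function.Surjective Θ :=
    (LinearMap.injective_iff_surjective_of_finrank_eq_finrank
      (Subspace.dual_finrank_eq).symm).mp hinj
  obtain ⟨u, hu⟩ := hsurj (t'.t R)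
  exact ⟨u, fun x => (LinearMap.congr_fun hu x).symm⟩

/-- Expansion of a hom in a basis with a dual family. -/
theorem expand_dual (t : CYTraces k A) (P R : FGProj k A) {ι : Type u} [Fintype ι]
    (g : Module.Basis ι k (P.carrier →ₗ[Aᵐᵒᵖ] R.carrier))
    (g' : ι → (R.carrier →ₗ[Aᵐᵒᵖ] P.carrier))
    (hd : ∀ i j, t.t R (g j ∘ₗ g' i) = if i = j then 1 else 0)
    (f : P.carrier →ₗ[Aᵐᵒᵖ] R.carrier) :
    f = ∑ j, t.t R (f ∘ₗ g' j) • g j := by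
  have key : ∀ j, t.t R (f ∘ₗ g' j) = g.repr f j := by
    intro j
    have h1 : f ∘ₗ g' j = ∑ i, g.repr f i • (g i ∘ₗ g' j) := by
      conv_lhs => rw [← g.sum_repr f]
      rw [sumComp]
      exact Finset.sum_congr rfl fun i _ => LinearMap.smul_comp _ _ _
    rw [h1, map_sum]
    simp [hd, Finset.sum_ite_eq]
  calc f = ∑ j, g.repr f j • g j := (g.sum_repr f).symm
    _ = ∑ j, t.t R (f ∘ₗ g' j) • g j := by
        exact Finset.sum_congr rfl fun j _ => by rw [key j]

/-- The dual family is determined by the duality relations. -/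
theorem dual_det (t : CYTraces k A) (P R : FGProj k A) {ι κ : Type u}
    [Fintype ι] [Fintype κ]
    (g : Module.Basis ι k (P.carrier →ₗ[Aᵐᵒᵖ] R.carrier))
    (g' : ι → (R.carrier →ₗ[Aᵐᵒᵖ] P.carrier))
    (G : Module.Basis κ k (P.carrier →ₗ[Aᵐᵒᵖ] R.carrier))
    (G' : κ → (R.carrier →ₗ[Aᵐᵒᵖ] P.carrier))
    (hG : ∀ i j, t.t R (G j ∘ₗ G' i) = if i = j then 1 else 0) (m : ι) :
    ∑ j, t.t R (G j ∘ₗ g' m) • G' j = g' m := by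
  by_contra hne
  obtain ⟨f, hf⟩ := t.nondeg_right P R (g' m - ∑ j, t.t R (G j ∘ₗ g' m) • G' j)
    (sub_ne_zero.mpr (Ne.symm hne))
  apply hf
  have hsub : f ∘ₗ (g' m - ∑ j, t.t R (G j ∘ₗ g' m) • G' j)
      = f ∘ₗ g' m - ∑ j, t.t R (G j ∘ₗ g' m) • (f ∘ₗ G' j) := by
    ext x; simp
  rw [hsub, map_sub, map_sum]
  have h2 : t.t R (f ∘ₗ g' m)
      = ∑ j, t.t R (f ∘ₗ G' j) * t.t R (G j ∘ₗ g' m) := by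
    conv_lhs => rw [expand_dual t P R G G' hG f]
    rw [sumComp, map_sum]
    refine Finset.sum_congr rfl fun j _ => ?_
    rw [LinearMap.smul_comp, map_smul, smul_eq_mul]
  rw [h2]
  rw [sub_eq_zero]
  refine Finset.sum_congr rfl fun j _ => ?_
  rw [map_smul, smul_eq_mul, mul_comm]

/-- Independence of the Higman operator of the choice of dual bases. -/
theorem sum_dual_eq (t : CYTraces k A) (P R : FGProj k A) {ι κ : Type u}
    [Fintype ι] [Fintype κ]
    (g : Module.Basis ι k (P.carrier →ₗ[Aᵐᵒᵖ] R.carrier))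
    (g' : ι → (R.carrier →ₗ[Aᵐᵒᵖ] P.carrier))
    (hg : ∀ i j, t.t R (g j ∘ₗ g' i) = if i = j then 1 else 0)
    (G : Module.Basis κ k (P.carrier →ₗ[Aᵐᵒᵖ] R.carrier))
    (G' : κ → (R.carrier →ₗ[Aᵐᵒᵖ] P.carrier))
    (hG : ∀ i j, t.t R (G j ∘ₗ G' i) = if i = j then 1 else 0)
    (y : R.carrier →ₗ[Aᵐᵒᵖ] R.carrier) :
    ∑ i, g' i ∘ₗ y ∘ₗ g i = ∑ j, G' j ∘ₗ y ∘ₗ G j := by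
  symm
  calc ∑ j, G' j ∘ₗ y ∘ₗ G j
      = ∑ j, ∑ m, t.t R (G j ∘ₗ g' m) • (G' j ∘ₗ y ∘ₗ g m) := by
        refine Finset.sum_congr rfl fun j _ => ?_
        conv_lhs => rw [expand_dual t P R g g' hg (G j)]
        ext x; simp
    _ = ∑ m, (∑ j, t.t R (G j ∘ₗ g' m) • G' j) ∘ₗ y ∘ₗ g m := by
        rw [Finset.sum_comm]
        refine Finset.sum_congr rfl fun m _ => ?_
        rw [sumComp]
        exact Finset.sum_congr rfl fun j _ => (LinearMap.smul_comp _ _ _).symm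
    _ = ∑ m, g' m ∘ₗ y ∘ₗ g m := by
        refine Finset.sum_congr rfl fun m _ => ?_
        rw [dual_det t P R g g' G G' hG m]

theorem key_step [FiniteDimensional k A] (t t' : CYTraces k A) (R : FGProj k A)
    (y : R.carrier →ₗ[Aᵐᵒᵖ] R.carrier) :
    ∃ y' : R.carrier →ₗ[Aᵐᵒᵖ] R.carrier,
      ∀ (P : FGProj k A) (ι κ : Type u) [Fintype ι] [Fintype κ]
        (g : Module.Basis ι k (P.carrier →ₗ[Aᵐᵒᵖ] R.carrier))
        (g' : Module.Basis ι k (R.carrier →ₗ[Aᵐᵒᵖ] P.carrier)),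
        (∀ i j, t.t R (g j ∘ₗ g' i) = if i = j then 1 else 0) →
        ∀ (h : Module.Basis κ k (P.carrier →ₗ[Aᵐᵒᵖ] R.carrier))
          (h' : Module.Basis κ k (R.carrier →ₗ[Aᵐᵒᵖ] P.carrier)),
          (∀ i j, t'.t R (h j ∘ₗ h' i) = if i = j then 1 else 0) →
          ∑ i, g' i ∘ₗ y ∘ₗ g i = ∑ j, h' j ∘ₗ y' ∘ₗ h j := by
  obtain ⟨u, hu⟩ := exists_shift t t' R
  refine ⟨u ∘ₗ y, ?_⟩
  intro P ι κ _ _ g g' hg h h' hh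
  have hGd : ∀ i j, t.t R (h j ∘ₗ (h' i ∘ₗ u)) = if i = j then 1 else 0 := by
    intro i j
    rw [← LinearMap.comp_assoc, ← hu, hh]
  have hmain := sum_dual_eq t P R g (fun i => g' i) hg h (fun i => h' i ∘ₗ u) hGd y
  rw [hmain]
  refine Finset.sum_congr rfl fun j _ => ?_
  ext x; rfl

end Aux

/-- Two Calabi–Yau families of traces `t` and `t'` on the f.g. projective
right `A`-modules give the same Higman ideal: every element `τ_R(y)` (with `τ` computed from
dual bases with respect to `t`) equals some `τ̃_{R'}(y')` (computed from dual bases with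
respect to `t'`), and conversely. -/
theorem higman_independent_of_trace
    (k A : Type u) [Field k] [IsAlgClosed k] [Ring A] [Algebra k A] [FiniteDimensional k A]
    (t t' : CYTraces k A) :
    (∀ (R : FGProj k A) (y : (R : Type u) →ₗ[Aᵐᵒᵖ] R),
      ∃ (R' : FGProj k A) (y' : (R' : Type u) →ₗ[Aᵐᵒᵖ] R'),
        ∀ (P : FGProj k A) (ι κ : Type u) [Fintype ι] [Fintype κ]
          (g : Module.Basis ι k ((P : Type u) →ₗ[Aᵐᵒᵖ] R))
          (g' : Module.Basis ι k ((R : Type u) →ₗ[Aᵐᵒᵖ] P)),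
          (∀ i j, t.t R (g j ∘ₗ g' i) = if i = j then 1 else 0) →
          ∀ (h : Module.Basis κ k ((P : Type u) →ₗ[Aᵐᵒᵖ] R'))
            (h' : Module.Basis κ k ((R' : Type u) →ₗ[Aᵐᵒᵖ] P)),
            (∀ i j, t'.t R' (h j ∘ₗ h' i) = if i = j then 1 else 0) →
            ∑ i, g' i ∘ₗ y ∘ₗ g i = ∑ j, h' j ∘ₗ y' ∘ₗ h j) ∧
    (∀ (R' : FGProj k A) (y' : (R' : Type u) →ₗ[Aᵐᵒᵖ] R'),
      ∃ (R : FGProj k A) (y : (R : Type u) →ₗ[Aᵐᵒᵖ] R),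
        ∀ (P : FGProj k A) (ι κ : Type u) [Fintype ι] [Fintype κ]
          (g : Module.Basis ι k ((P : Type u) →ₗ[Aᵐᵒᵖ] R))
          (g' : Module.Basis ι k ((R : Type u) →ₗ[Aᵐᵒᵖ] P)),
          (∀ i j, t.t R (g j ∘ₗ g' i) = if i = j then 1 else 0) →
          ∀ (h : Module.Basis κ k ((P : Type u) →ₗ[Aᵐᵒᵖ] R'))
            (h' : Module.Basis κ k ((R' : Type u) →ₗ[Aᵐᵒᵖ] P)),
            (∀ i j, t'.t R' (h j ∘ₗ h' i) = if i = j then 1 else 0) →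
            ∑ i, g' i ∘ₗ y ∘ₗ g i = ∑ j, h' j ∘ₗ y' ∘ₗ h j) := by
  constructor
  · intro R y
    obtain ⟨y', hy'⟩ := key_step t t' R y
    exact ⟨R, y', hy'⟩
  · intro R' y'
    obtain ⟨y, hy⟩ := key_step t' t R' y'
    exact ⟨R', y, fun P ι κ _ _ g g' hg h h' hh => (hy P κ ι h h' hh g g' hg).symm⟩
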